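/- Let ε₀ > 0 and suppose that for every h ∈ (0,T) and every stopping time τ taking values in [0, T−h), P(F_X^j(τ, h, log(1+ε₀), log(1+ε₀)) | 𝓕_τ) > 0 almost surely for each j ∈ {−1, 0, 1}. Define stopping times τ₀ = 0, τ_{n+1} = inf{ t ≥ τ_n : X_t − X_{τ_n} ∉ (−log(1+ε₀), log(1+ε₀)) } ∧ T, and R_n = sign(X_{τ_n} − X_{τ_{n−1}}) if τ_n < T, R_n = 0 if τ_n = T. Then for every n ≥ 1, every j ∈ {−1, 0, 1}, and every A ∈ 𝓕_{τ_{n−1}} with A ⊆ {τ_{n−1} < T} and P(A) > 0, one has P(A ∩ {R_n = j}) > 0. -/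

import Mathlib

open MeasureTheory Set Filter
open Topology

noncomputable section

/-- The events `F_X^j(τ, h, δ, c)` from the paper: for `j = 0`,
`{sup_{t∈[0,T−τ)} |X_{τ+t} − X_τ| < δ}`; for `j = 1`,
`{sup_{t∈[0,h]} (X_{τ+t} − X_τ) < δ} ∩ {sup_{t∈[h,T−τ)} (X_{τ+t} − X_τ) < −c}`; for `j = −1`,
`{inf_{t∈[0,h]} (X_{τ+t} − X_τ) > −δ} ∩ {inf_{t∈[h,T−τ)} (X_{τ+t} − X_τ) > c}`. -/
def FXev {Ω : Type*} (X : ℝ → Ω → ℝ) (T : ℝ) (τ : Ω → ℝ) (h δ c : ℝ) (j : ℤ) : Set Ω :=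
  if j = 0 then
    {ω | sSup ((fun t => |X (τ ω + t) ω - X (τ ω) ω|) '' Ico 0 (T - τ ω)) < δ}
  else if j = 1 then
    {ω | sSup ((fun t => X (τ ω + t) ω - X (τ ω) ω) '' Icc 0 h) < δ ∧
         sSup ((fun t => X (τ ω + t) ω - X (τ ω) ω) '' Ico h (T - τ ω)) < -c}
  else
    {ω | -δ < sInf ((fun t => X (τ ω + t) ω - X (τ ω) ω) '' Icc 0 h) ∧
         c < sInf ((fun t => X (τ ω + t) ω - X (τ ω) ω) '' Ico h (T - τ ω))}

/-- The stopping times `τ₀ = 0`,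
`τ_{n+1} = inf{ t ≥ τ_n : X_t − X_{τ_n} ∉ (−log(1+ε₀), log(1+ε₀)) } ∧ T`. -/
def tauSeq {Ω : Type*} (X : ℝ → Ω → ℝ) (T ε₀ : ℝ) : ℕ → Ω → ℝ
  | 0 => fun _ => 0
  | n + 1 => fun ω =>
      sInf ({t | tauSeq X T ε₀ n ω ≤ t ∧
        X t ω - X (tauSeq X T ε₀ n ω) ω ∉
          Ioo (-Real.log (1 + ε₀)) (Real.log (1 + ε₀))} ∪ {T})

/-- `R_n = sign(X_{τ_n} − X_{τ_{n−1}})` if `τ_n < T`, and `R_n = 0` if `τ_n = T`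
(for `n ≥ 1`; the value `R_0 = 0` is irrelevant). -/
def Rseq {Ω : Type*} (X : ℝ → Ω → ℝ) (T ε₀ : ℝ) : ℕ → Ω → ℝ
  | 0 => fun _ => 0
  | n + 1 => fun ω =>
      if tauSeq X T ε₀ (n + 1) ω < T then
        Real.sign (X (tauSeq X T ε₀ (n + 1) ω) ω - X (tauSeq X T ε₀ n ω) ω)
      else 0

section Aux

variable {Ω : Type*} {m : MeasurableSpace Ω}

/-- A continuous adapted process evaluated at a stopping time bounded by `t` is
`ℱ t`-measurable. -/
lemma measurable_stoppedValue_of_le (ℱ : Filtration ℝ m)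
    {X : ℝ → Ω → ℝ} (hadp : Adapted ℱ X) {T : ℝ}
    (hcont : ∀ ω, ContinuousOn (fun t => X t ω) (Icc 0 T))
    {ρ : Ω → ℝ} (hρ : IsStoppingTime ℱ (fun ω => (ρ ω : WithTop ℝ))) {t : ℝ} (htT : t ≤ T)
    (hρt : ∀ ω, ρ ω ∈ Icc 0 t) :
    Measurable[ℱ t] fun ω => X (ρ ω) ω := by
  letI : MeasurableSpace Ω := ℱ t
  have hρm : Measurable[ℱ t] ρ := by
    refine measurable_of_Iic fun i => ?_
    by_cases hi : i ≤ t
    · have h := ℱ.mono hi _ (hρ i)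
      simp only [WithTop.coe_le_coe] at h
      exact h
    · have h : ρ ⁻¹' Iic i = univ :=
        eq_univ_of_forall fun ω => (hρt ω).2.trans (not_le.mp hi).le
      rw [h]
      exact MeasurableSet.univ
  set g : ℕ → Ω → ℝ := fun k ω => min t ((⌈ρ ω * 2 ^ k⌉ : ℝ) / 2 ^ k) with hg
  have hgmeas : ∀ k, Measurable[ℱ t] fun ω => X (g k ω) ω := by
    intro k
    intro s hs
    have : (fun ω => X (g k ω) ω) ⁻¹' s =
        ⋃ j : ℤ, {ω | ⌈ρ ω * 2 ^ k⌉ = j} ∩ ((X (min t ((j : ℝ) / 2 ^ k))) ⁻¹' s) := by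
      ext ω
      simp only [mem_preimage, mem_iUnion, mem_inter_iff, mem_setOf_eq]
      constructor
      · intro h
        exact ⟨⌈ρ ω * 2 ^ k⌉, rfl, h⟩
      · rintro ⟨j, hj, h⟩
        simpa [hg, hj] using h
    rw [this]
    refine MeasurableSet.iUnion fun j => MeasurableSet.inter ?_ ?_
    · exact ((hρm.mul_const _).ceil) (measurableSet_singleton j)
    · exact (Measurable.mono (hadp _) (ℱ.mono (min_le_left _ _)) le_rfl) hs
  have htend : ∀ ω, Tendsto (fun k => X (g k ω) ω) atTop (𝓝 (X (ρ ω) ω)) := by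
    intro ω
    have h2k : ∀ k : ℕ, (0:ℝ) < 2 ^ k := fun k => by positivity
    have hge : ∀ k, ρ ω ≤ g k ω := by
      intro k
      refine le_min (hρt ω).2 ?_
      rw [le_div_iff₀ (h2k k)]
      exact Int.le_ceil _
    have hle : ∀ k, g k ω ≤ ρ ω + (1/2) ^ k := by
      intro k
      refine (min_le_right _ _).trans ?_
      rw [div_le_iff₀ (h2k k)]
      have := (Int.ceil_lt_add_one (ρ ω * 2 ^ k)).le
      calc ((⌈ρ ω * 2 ^ k⌉ : ℝ)) ≤ ρ ω * 2 ^ k + 1 := this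
        _ = (ρ ω + (1/2) ^ k) * 2 ^ k := by
            rw [add_mul, ← mul_pow]
            norm_num
    have htρ : Tendsto (fun k => g k ω) atTop (𝓝 (ρ ω)) := by
      have hub : Tendsto (fun k : ℕ => ρ ω + (1/2 : ℝ) ^ k) atTop (𝓝 (ρ ω + 0)) :=
        tendsto_const_nhds.add
          (tendsto_pow_atTop_nhds_zero_of_lt_one (by norm_num) (by norm_num))
      rw [add_zero] at hub
      exact tendsto_of_tendsto_of_tendsto_of_le_of_le tendsto_const_nhds hub hge hle
    have hmem : ∀ k, g k ω ∈ Icc (0:ℝ) T := fun k =>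
      ⟨le_trans (hρt ω).1 (hge k), le_trans (min_le_left _ _) htT⟩
    have hcw : ContinuousWithinAt (fun v => X v ω) (Icc 0 T) (ρ ω) :=
      hcont ω (ρ ω) ⟨(hρt ω).1, (hρt ω).2.trans htT⟩
    exact hcw.tendsto.comp
      (tendsto_nhdsWithin_of_tendsto_nhds_of_eventually_within _ htρ
        (Eventually.of_forall hmem))
  exact measurable_of_tendsto_metrizable hgmeas (tendsto_pi_nhds.2 htend)

variable {X : ℝ → Ω → ℝ} {T ε₀ : ℝ}

lemma tauSeq_mem_Icc (hT : 0 ≤ T) : ∀ n ω, tauSeq X T ε₀ n ω ∈ Icc 0 T := by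
  intro n
  induction n with
  | zero => intro ω; exact ⟨le_rfl, hT⟩
  | succ n ih =>
    intro ω
    have hbdd : BddBelow ({t | tauSeq X T ε₀ n ω ≤ t ∧
        X t ω - X (tauSeq X T ε₀ n ω) ω ∉
          Ioo (-Real.log (1 + ε₀)) (Real.log (1 + ε₀))} ∪ {T}) := by
      refine ⟨0, ?_⟩
      rintro x (⟨hx, -⟩ | rfl)
      · exact (ih ω).1.trans hx
      · exact hT
    constructor
    · refine le_csInf ⟨T, Or.inr rfl⟩ ?_
      rintro x (⟨hx, -⟩ | rfl)
      · exact (ih ω).1.trans hx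
      · exact hT
    · exact csInf_le hbdd (Or.inr rfl)

/-- `τ_{n+1}` is bounded below by prior values that exit, and characterization via a closed set. -/
lemma tauSeq_succ_le {n : ℕ} {ω : Ω} (hT : 0 ≤ T) {v : ℝ}
    (hv : tauSeq X T ε₀ n ω ≤ v)
    (hni : X v ω - X (tauSeq X T ε₀ n ω) ω ∉
      Ioo (-Real.log (1 + ε₀)) (Real.log (1 + ε₀))) :
    tauSeq X T ε₀ (n + 1) ω ≤ v := by
  refine csInf_le ?_ (Or.inl ⟨hv, hni⟩)
  refine ⟨0, ?_⟩
  rintro x (⟨hx, -⟩ | rfl)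
  · exact (tauSeq_mem_Icc hT n ω).1.trans hx
  · exact hT

lemma tauSeq_succ_mem (hcont : ∀ ω, ContinuousOn (fun t => X t ω) (Icc 0 T))
    (hT : 0 ≤ T) (n : ℕ) (ω : Ω) :
    tauSeq X T ε₀ (n + 1) ω ∈
      (Icc (tauSeq X T ε₀ n ω) T ∩
        (fun v => X v ω - X (tauSeq X T ε₀ n ω) ω) ⁻¹'
          (Ioo (-Real.log (1 + ε₀)) (Real.log (1 + ε₀)))ᶜ) ∪ {T} := by
  set s := tauSeq X T ε₀ n ω with hsdef
  have hs : s ∈ Icc 0 T := tauSeq_mem_Icc hT n ω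
  set δ := Real.log (1 + ε₀)
  set C : Set ℝ := Icc s T ∩ (fun v => X v ω - X s ω) ⁻¹' (Ioo (-δ) δ)ᶜ with hC
  set K : Set ℝ := C ∪ {T} with hK
  have hCcont : ContinuousOn (fun v => X v ω - X s ω) (Icc s T) :=
    ((hcont ω).mono (Icc_subset_Icc_left hs.1)).sub continuousOn_const
  have hKcl : IsClosed K :=
    (hCcont.preimage_isClosed_of_isClosed isClosed_Icc
      isOpen_Ioo.isClosed_compl).union isClosed_singleton
  have hKne : K.Nonempty := ⟨T, Or.inr rfl⟩
  have hKbdd : BddBelow K := by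
    refine ⟨s, ?_⟩
    rintro x (⟨⟨h1, -⟩, -⟩ | rfl)
    · exact h1
    · exact hs.2
  have hSbdd : BddBelow ({t | s ≤ t ∧ X t ω - X s ω ∉ Ioo (-δ) δ} ∪ {T}) := by
    refine ⟨0, ?_⟩
    rintro x (⟨hx, -⟩ | rfl)
    · exact hs.1.trans hx
    · exact hT
  have heq : tauSeq X T ε₀ (n + 1) ω = sInf K := by
    have hdef : tauSeq X T ε₀ (n + 1) ω =
        sInf ({t | s ≤ t ∧ X t ω - X s ω ∉ Ioo (-δ) δ} ∪ {T}) := by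
      simp only [tauSeq, ← hsdef]
      rfl
    rw [hdef]
    apply le_antisymm
    · refine csInf_le_csInf hSbdd hKne ?_
      rintro x (⟨⟨h1, -⟩, h2⟩ | rfl)
      · exact Or.inl ⟨h1, h2⟩
      · exact Or.inr rfl
    · refine le_csInf ⟨T, Or.inr rfl⟩ ?_
      rintro x (⟨hx1, hx2⟩ | rfl)
      · by_cases hxT : x ≤ T
        · exact csInf_le hKbdd (Or.inl ⟨⟨hx1, hxT⟩, hx2⟩)
        · exact (csInf_le hKbdd (Or.inr rfl)).trans (not_le.mp hxT).le
      · exact csInf_le hKbdd (Or.inr rfl)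
  rw [heq]
  exact hKcl.csInf_mem hKne hKbdd

lemma isStoppingTime_tauSeq (ℱ : Filtration ℝ m)
    (hadp : Adapted ℱ X) (hT : 0 < T) (hδ : 0 < Real.log (1 + ε₀))
    (hcont : ∀ ω, ContinuousOn (fun t => X t ω) (Icc 0 T)) :
    ∀ n, IsStoppingTime ℱ (fun ω => (tauSeq X T ε₀ n ω : WithTop ℝ)) := by
  intro n
  induction n with
  | zero => exact isStoppingTime_const ℱ 0
  | succ n ih =>
    intro t
    simp only [WithTop.coe_le_coe]
    set δ := Real.log (1 + ε₀) with hδdef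
    by_cases ht0 : t < 0
    · convert @MeasurableSet.empty _ (ℱ t)
      ext ω
      simp only [mem_setOf_eq, mem_empty_iff_false, iff_false, not_le]
      exact lt_of_lt_of_le ht0 (tauSeq_mem_Icc hT.le (n+1) ω).1
    by_cases htT : T ≤ t
    · convert MeasurableSet.univ (α := Ω)
      ext ω
      simp only [mem_setOf_eq, mem_univ, iff_true]
      exact (tauSeq_mem_Icc hT.le (n+1) ω).2.trans htT
    push_neg at ht0 htT
    set D : Set ℝ := insert t {u ∈ Icc 0 t | ∃ q : ℚ, (q : ℝ) = u} with hD
    have hDc : D.Countable := by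
      refine Countable.insert t (Countable.mono ?_ (countable_range ((↑) : ℚ → ℝ)))
      rintro u ⟨-, q, rfl⟩
      exact ⟨q, rfl⟩
    have hDsub : D ⊆ Icc 0 t := by
      rintro u (rfl | ⟨hu, -⟩)
      · exact ⟨ht0, le_rfl⟩
      · exact hu
    have hkey : {ω | tauSeq X T ε₀ (n + 1) ω ≤ t} =
        ⋂ k : ℕ, ⋃ u ∈ D, {ω | δ - 1 / (k + 1) <
          |X (min (max u (tauSeq X T ε₀ n ω)) t) ω - X (min (tauSeq X T ε₀ n ω) t) ω|} := by
      ext ω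
      have hs : tauSeq X T ε₀ n ω ∈ Icc 0 T := tauSeq_mem_Icc hT.le n ω
      set G : ℝ → ℝ := fun u =>
        X (min (max u (tauSeq X T ε₀ n ω)) t) ω - X (min (tauSeq X T ε₀ n ω) t) ω with hG
      have hGcont : Continuous G := by
        refine Continuous.sub ?_ continuous_const
        refine (hcont ω).comp_continuous
          ((continuous_id.max continuous_const).min continuous_const) fun u => ?_
        exact ⟨le_min ((hs.1).trans (le_max_right _ _)) ht0, (min_le_right _ _).trans htT.le⟩
      have hmain : tauSeq X T ε₀ (n + 1) ω ≤ t ↔ ∃ u ∈ Icc 0 t, δ ≤ |G u| := by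
        constructor
        · intro hle
          rcases tauSeq_succ_mem (X := X) (ε₀ := ε₀) hcont hT.le n ω with hmem | hmem
          · obtain ⟨⟨hge, -⟩, hni⟩ := hmem
            simp only [mem_preimage, mem_compl_iff, mem_Ioo, not_and, not_lt] at hni
            refine ⟨tauSeq X T ε₀ (n+1) ω,
              ⟨(tauSeq_mem_Icc hT.le n ω).1.trans hge, hle⟩, ?_⟩
            have h1 : min (max (tauSeq X T ε₀ (n+1) ω) (tauSeq X T ε₀ n ω)) t
                = tauSeq X T ε₀ (n+1) ω := by rw [max_eq_left hge, min_eq_left hle]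
            have h2 : min (tauSeq X T ε₀ n ω) t = tauSeq X T ε₀ n ω :=
              min_eq_left (hge.trans hle)
            simp only [hG, h1, h2]
            rcases le_or_gt δ (X (tauSeq X T ε₀ (n+1) ω) ω - X (tauSeq X T ε₀ n ω) ω)
              with hc | hc
            · exact le_abs.mpr (Or.inl hc)
            · have hx : X (tauSeq X T ε₀ (n+1) ω) ω - X (tauSeq X T ε₀ n ω) ω ≤ -δ := by
                by_contra hxx
                push_neg at hxx
                exact absurd (hni (by linarith)) (not_le.mpr hc)
              exact le_abs.mpr (Or.inr (by linarith))
          · simp only [mem_singleton_iff] at hmem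
            exact absurd (hmem ▸ hle) (not_le.mpr htT)
        · rintro ⟨u, hu, hGu⟩
          simp only [hG] at hGu
          have hst : tauSeq X T ε₀ n ω ≤ t := by
            by_contra hst
            push_neg at hst
            rw [min_eq_right ((le_max_right u _).trans' hst.le),
              min_eq_right hst.le, sub_self, abs_zero] at hGu
            exact absurd (hδ.trans_le hGu) (lt_irrefl 0)
          rw [min_eq_left hst] at hGu
          have hv1 : tauSeq X T ε₀ n ω ≤ min (max u (tauSeq X T ε₀ n ω)) t :=
            le_min (le_max_right _ _) hst
          have hni : X (min (max u (tauSeq X T ε₀ n ω)) t) ω - X (tauSeq X T ε₀ n ω) ω ∉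
              Ioo (-δ) δ := by
            rintro ⟨ha, hb⟩
            rcases le_abs.mp hGu with hc | hc
            · linarith
            · linarith
          exact (tauSeq_succ_le hT.le hv1 hni).trans (min_le_right _ _)
      rw [mem_setOf_eq, hmain]
      simp only [mem_iInter, mem_iUnion, mem_setOf_eq]
      constructor
      · rintro ⟨u, hu, hGu⟩ k
        have hUopen : IsOpen {x | δ - 1 / ((k:ℝ) + 1) < |G x|} :=
          isOpen_lt continuous_const hGcont.abs
        have hkpos : (0:ℝ) < 1 / ((k:ℝ) + 1) := by positivity
        have huU : u ∈ {x | δ - 1 / ((k:ℝ) + 1) < |G x|} := by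
          rw [mem_setOf_eq]
          linarith
        rcases eq_or_lt_of_le hu.2 with rfl | hut
        · exact ⟨u, mem_insert _ _, huU⟩
        · obtain ⟨ε, hε, hball⟩ := Metric.isOpen_iff.mp hUopen u huU
          obtain ⟨q, hq1, hq2⟩ := exists_rat_btwn (lt_min (lt_add_of_pos_right u hε) hut)
          refine ⟨(q : ℝ), Or.inr ⟨⟨hu.1.trans hq1.le, (hq2.trans_le (min_le_right _ _)).le⟩,
            q, rfl⟩, hball ?_⟩
          rw [Real.ball_eq_Ioo]
          exact ⟨by linarith, hq2.trans_le (min_le_left _ _)⟩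
      · intro hk
        obtain ⟨u, hu, hmax⟩ := isCompact_Icc.exists_isMaxOn ⟨0, le_rfl, ht0⟩
          ((hGcont.abs).continuousOn (s := Icc 0 t))
        have hδle : δ ≤ |G u| := by
          have htd : Tendsto (fun k : ℕ => δ - 1 / ((k:ℝ) + 1)) atTop (𝓝 δ) := by
            have : Tendsto (fun k : ℕ => δ - 1 / ((k:ℝ) + 1)) atTop (𝓝 (δ - 0)) :=
              tendsto_const_nhds.sub tendsto_one_div_add_atTop_nhds_zero_nat
            rwa [sub_zero] at this
          refine le_of_tendsto htd (Eventually.of_forall fun k => ?_)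
          obtain ⟨w, hw, hGw⟩ := hk k
          exact (hGw.le.trans (hmax (hDsub hw)))
        exact ⟨u, hu, hδle⟩
    rw [show {ω | tauSeq X T ε₀ (n + 1) ω ≤ t} = _ from hkey]
    refine MeasurableSet.iInter fun k => MeasurableSet.biUnion hDc fun u hu => ?_
    have hm1 : Measurable[ℱ t] fun ω => X (min (max u (tauSeq X T ε₀ n ω)) t) ω := by
      have hm1' : Measurable[ℱ t] fun ω => X (min (max (tauSeq X T ε₀ n ω) u) t) ω := by
        refine measurable_stoppedValue_of_le ℱ hadp hcont (by
            have := (ih.max_const u).min_const t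
            simp only [← WithTop.coe_min, ← WithTop.coe_max] at this
            exact this)
          htT.le fun ω => ?_
        exact ⟨le_min ((hDsub hu).1.trans (le_max_right _ _)) ht0, min_le_right _ _⟩
      simpa [max_comm] using hm1'
    have hm2 : Measurable[ℱ t] fun ω => X (min (tauSeq X T ε₀ n ω) t) ω := by
      refine measurable_stoppedValue_of_le ℱ hadp hcont (by
          have := ih.min_const t
          simp only [← WithTop.coe_min] at this
          exact this) htT.le fun ω => ?_
      exact ⟨le_min (tauSeq_mem_Icc hT.le n ω).1 ht0, min_le_right _ _⟩
    letI : MeasurableSpace Ω := ℱ t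
    exact measurableSet_lt measurable_const ((hm1.sub hm2).abs)

lemma pathwise_zero (hT : 0 < T) (hδ : 0 < Real.log (1 + ε₀))
    (hcont : ∀ ω, ContinuousOn (fun t => X t ω) (Icc 0 T)) {n : ℕ} {ω : Ω}
    (hsup : sSup ((fun t => |X (tauSeq X T ε₀ n ω + t) ω - X (tauSeq X T ε₀ n ω) ω|) ''
      Ico 0 (T - tauSeq X T ε₀ n ω)) < Real.log (1 + ε₀)) :
    Rseq X T ε₀ (n + 1) ω = 0 := by
  have hsmem : tauSeq X T ε₀ n ω ∈ Icc 0 T := tauSeq_mem_Icc hT.le n ω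
  obtain ⟨M, hM⟩ := isCompact_Icc.exists_bound_of_continuousOn (hcont ω)
  have hbdd : BddAbove ((fun t => |X (tauSeq X T ε₀ n ω + t) ω - X (tauSeq X T ε₀ n ω) ω|) ''
      Ico 0 (T - tauSeq X T ε₀ n ω)) := by
    refine ⟨M + M, ?_⟩
    rintro y ⟨t, ht, rfl⟩
    have hv : tauSeq X T ε₀ n ω + t ∈ Icc (0:ℝ) T :=
      ⟨add_nonneg hsmem.1 ht.1, by linarith [ht.2]⟩
    calc |X (tauSeq X T ε₀ n ω + t) ω - X (tauSeq X T ε₀ n ω) ω|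
        ≤ |X (tauSeq X T ε₀ n ω + t) ω| + |X (tauSeq X T ε₀ n ω) ω| := abs_sub _ _
      _ ≤ M + M := add_le_add (hM _ hv) (hM _ hsmem)
  have hTeq : tauSeq X T ε₀ (n + 1) ω = T := by
    rcases tauSeq_succ_mem (X := X) (ε₀ := ε₀) hcont hT.le n ω with hmem | hmem
    · obtain ⟨⟨hge, hleT⟩, hni⟩ := hmem
      rcases eq_or_lt_of_le hleT with heq | hlt
      · exact heq
      · exfalso
        have ht : tauSeq X T ε₀ (n + 1) ω - tauSeq X T ε₀ n ω ∈
            Ico (0:ℝ) (T - tauSeq X T ε₀ n ω) := ⟨sub_nonneg.mpr hge, by linarith⟩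
        have h3 := le_csSup hbdd (mem_image_of_mem _ ht)
        rw [show tauSeq X T ε₀ n ω + (tauSeq X T ε₀ (n + 1) ω - tauSeq X T ε₀ n ω)
            = tauSeq X T ε₀ (n + 1) ω from by ring] at h3
        have hlt2 := lt_of_le_of_lt h3 hsup
        simp only [mem_preimage, mem_compl_iff, mem_Ioo, not_and, not_lt] at hni
        rcases abs_lt.mp hlt2 with ⟨ha, hb⟩
        linarith [hni ha]
    · exact mem_singleton_iff.mp hmem
  simp only [Rseq, hTeq]
  rw [if_neg (lt_irrefl T)]

lemma pathwise_neg (hT : 0 < T) (hδ : 0 < Real.log (1 + ε₀))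
    (hcont : ∀ ω, ContinuousOn (fun t => X t ω) (Icc 0 T)) {n : ℕ} {ω : Ω} {h : ℝ}
    (hh : 0 < h) (hle : tauSeq X T ε₀ n ω ≤ T - 2 * h)
    (h1 : sSup ((fun t => X (tauSeq X T ε₀ n ω + t) ω - X (tauSeq X T ε₀ n ω) ω) ''
      Icc 0 h) < Real.log (1 + ε₀))
    (h2 : sSup ((fun t => X (tauSeq X T ε₀ n ω + t) ω - X (tauSeq X T ε₀ n ω) ω) ''
      Ico h (T - tauSeq X T ε₀ n ω)) < -Real.log (1 + ε₀)) :
    Rseq X T ε₀ (n + 1) ω = -1 := by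
  have hsmem : tauSeq X T ε₀ n ω ∈ Icc 0 T := tauSeq_mem_Icc hT.le n ω
  obtain ⟨M, hM⟩ := isCompact_Icc.exists_bound_of_continuousOn (hcont ω)
  have hbdd : ∀ s' : Set ℝ, s' ⊆ Icc 0 (T - tauSeq X T ε₀ n ω) →
      BddAbove ((fun t => X (tauSeq X T ε₀ n ω + t) ω - X (tauSeq X T ε₀ n ω) ω) '' s') := by
    intro s' hs'
    refine ⟨M + M, ?_⟩
    rintro y ⟨t, ht, rfl⟩
    obtain ⟨ht1, ht2⟩ := hs' ht
    have hv : tauSeq X T ε₀ n ω + t ∈ Icc (0:ℝ) T :=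
      ⟨add_nonneg hsmem.1 ht1, by linarith⟩
    have e1 : X (tauSeq X T ε₀ n ω + t) ω ≤ M := (le_abs_self _).trans (hM _ hv)
    have e2 : -X (tauSeq X T ε₀ n ω) ω ≤ M := (neg_le_abs _).trans (hM _ hsmem)
    simp only
    linarith
  have hLlt : ∀ t ∈ Icc (0:ℝ) h,
      X (tauSeq X T ε₀ n ω + t) ω - X (tauSeq X T ε₀ n ω) ω < Real.log (1 + ε₀) := by
    intro t ht
    refine lt_of_le_of_lt ?_ h1
    exact le_csSup (hbdd _ (fun x hx => ⟨hx.1, by linarith [hx.2]⟩)) (mem_image_of_mem _ ht)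
  have hLh : X (tauSeq X T ε₀ n ω + h) ω - X (tauSeq X T ε₀ n ω) ω < -Real.log (1 + ε₀) := by
    refine lt_of_le_of_lt ?_ h2
    exact le_csSup (hbdd _ (fun x hx => ⟨hh.le.trans hx.1, hx.2.le⟩))
      (mem_image_of_mem _ ⟨le_rfl, by linarith⟩)
  have hτle : tauSeq X T ε₀ (n + 1) ω ≤ tauSeq X T ε₀ n ω + h := by
    refine tauSeq_succ_le hT.le (by linarith) ?_
    rintro ⟨ha, -⟩
    linarith
  have hτlt : tauSeq X T ε₀ (n + 1) ω < T := hτle.trans_lt (by linarith)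
  rcases tauSeq_succ_mem (X := X) (ε₀ := ε₀) hcont hT.le n ω with hmem | hmem
  · obtain ⟨⟨hge, -⟩, hni⟩ := hmem
    simp only [mem_preimage, mem_compl_iff, mem_Ioo, not_and, not_lt] at hni
    have hval : X (tauSeq X T ε₀ (n + 1) ω) ω - X (tauSeq X T ε₀ n ω) ω
        < Real.log (1 + ε₀) := by
      have := hLlt (tauSeq X T ε₀ (n + 1) ω - tauSeq X T ε₀ n ω)
        ⟨sub_nonneg.mpr hge, by linarith⟩
      rwa [show tauSeq X T ε₀ n ω + (tauSeq X T ε₀ (n + 1) ω - tauSeq X T ε₀ n ω)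
        = tauSeq X T ε₀ (n + 1) ω from by ring] at this
    have hneg : X (tauSeq X T ε₀ (n + 1) ω) ω - X (tauSeq X T ε₀ n ω) ω
        ≤ -Real.log (1 + ε₀) := by
      by_contra hxx
      push_neg at hxx
      linarith [hni (by linarith)]
    simp only [Rseq]
    rw [if_pos hτlt]
    exact Real.sign_of_neg (by linarith)
  · exfalso
    rw [mem_singleton_iff.mp hmem] at hτlt
    exact lt_irrefl T hτlt

lemma pathwise_pos (hT : 0 < T) (hδ : 0 < Real.log (1 + ε₀))
    (hcont : ∀ ω, ContinuousOn (fun t => X t ω) (Icc 0 T)) {n : ℕ} {ω : Ω} {h : ℝ}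
    (hh : 0 < h) (hle : tauSeq X T ε₀ n ω ≤ T - 2 * h)
    (h1 : -Real.log (1 + ε₀) < sInf ((fun t => X (tauSeq X T ε₀ n ω + t) ω -
      X (tauSeq X T ε₀ n ω) ω) '' Icc 0 h))
    (h2 : Real.log (1 + ε₀) < sInf ((fun t => X (tauSeq X T ε₀ n ω + t) ω -
      X (tauSeq X T ε₀ n ω) ω) '' Ico h (T - tauSeq X T ε₀ n ω))) :
    Rseq X T ε₀ (n + 1) ω = 1 := by
  have hsmem : tauSeq X T ε₀ n ω ∈ Icc 0 T := tauSeq_mem_Icc hT.le n ω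
  obtain ⟨M, hM⟩ := isCompact_Icc.exists_bound_of_continuousOn (hcont ω)
  have hbdd : ∀ s' : Set ℝ, s' ⊆ Icc 0 (T - tauSeq X T ε₀ n ω) →
      BddBelow ((fun t => X (tauSeq X T ε₀ n ω + t) ω - X (tauSeq X T ε₀ n ω) ω) '' s') := by
    intro s' hs'
    refine ⟨-(M + M), ?_⟩
    rintro y ⟨t, ht, rfl⟩
    obtain ⟨ht1, ht2⟩ := hs' ht
    have hv : tauSeq X T ε₀ n ω + t ∈ Icc (0:ℝ) T :=
      ⟨add_nonneg hsmem.1 ht1, by linarith⟩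
    have e1 : -X (tauSeq X T ε₀ n ω + t) ω ≤ M := (neg_le_abs _).trans (hM _ hv)
    have e2 : X (tauSeq X T ε₀ n ω) ω ≤ M := (le_abs_self _).trans (hM _ hsmem)
    simp only
    linarith
  have hLgt : ∀ t ∈ Icc (0:ℝ) h,
      -Real.log (1 + ε₀) < X (tauSeq X T ε₀ n ω + t) ω - X (tauSeq X T ε₀ n ω) ω := by
    intro t ht
    refine lt_of_lt_of_le h1 ?_
    exact csInf_le (hbdd _ (fun x hx => ⟨hx.1, by linarith [hx.2]⟩)) (mem_image_of_mem _ ht)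
  have hLh : Real.log (1 + ε₀) < X (tauSeq X T ε₀ n ω + h) ω - X (tauSeq X T ε₀ n ω) ω := by
    refine lt_of_lt_of_le h2 ?_
    exact csInf_le (hbdd _ (fun x hx => ⟨hh.le.trans hx.1, hx.2.le⟩))
      (mem_image_of_mem _ ⟨le_rfl, by linarith⟩)
  have hτle : tauSeq X T ε₀ (n + 1) ω ≤ tauSeq X T ε₀ n ω + h := by
    refine tauSeq_succ_le hT.le (by linarith) ?_
    rintro ⟨-, hb⟩
    linarith
  have hτlt : tauSeq X T ε₀ (n + 1) ω < T := hτle.trans_lt (by linarith)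
  rcases tauSeq_succ_mem (X := X) (ε₀ := ε₀) hcont hT.le n ω with hmem | hmem
  · obtain ⟨⟨hge, -⟩, hni⟩ := hmem
    simp only [mem_preimage, mem_compl_iff, mem_Ioo, not_and, not_lt] at hni
    have hval : -Real.log (1 + ε₀)
        < X (tauSeq X T ε₀ (n + 1) ω) ω - X (tauSeq X T ε₀ n ω) ω := by
      have := hLgt (tauSeq X T ε₀ (n + 1) ω - tauSeq X T ε₀ n ω)
        ⟨sub_nonneg.mpr hge, by linarith⟩
      rwa [show tauSeq X T ε₀ n ω + (tauSeq X T ε₀ (n + 1) ω - tauSeq X T ε₀ n ω)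
        = tauSeq X T ε₀ (n + 1) ω from by ring] at this
    have hpos : Real.log (1 + ε₀)
        ≤ X (tauSeq X T ε₀ (n + 1) ω) ω - X (tauSeq X T ε₀ n ω) ω := hni hval
    simp only [Rseq]
    rw [if_pos hτlt]
    exact Real.sign_of_pos (by linarith)
  · exfalso
    rw [mem_singleton_iff.mp hmem] at hτlt
    exact lt_irrefl T hτlt

end Aux

/-- Second step of the proof of Theorem 2.2 of the paper: under the conditional positivity
assumption, for every `n ≥ 1` (here written with `n + 1` playing the role of `n`, so that
`tauSeq X T ε₀ n = τ_{n−1}`), every `j ∈ {−1,0,1}` and every `A ∈ ℱ_{τ_{n−1}}` (membership in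
the σ-algebra of the stopping time `τ_{n−1}` being expressed by its defining property) with
`A ⊆ {τ_{n−1} < T}` and `P(A) > 0`, one has `P(A ∩ {R_n = j}) > 0`. -/
theorem positivity_of_Rn_events {Ω : Type*} {m : MeasurableSpace Ω} (P : Measure Ω)
    [IsProbabilityMeasure P] (ℱ : Filtration ℝ m) (T : ℝ) (hT : 0 < T)
    (X : ℝ → Ω → ℝ) (hadp : Adapted ℱ X)
    (hcont : ∀ ω, ContinuousOn (fun t => X t ω) (Icc 0 T))
    (htriv : ∀ s : Set Ω, MeasurableSet[ℱ 0] s → P s = 0 ∨ P s = 1)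
    (ε₀ : ℝ) (hε₀ : 0 < ε₀)
    (hcond : ∀ h ∈ Ioo (0:ℝ) T, ∀ (τ : Ω → ℝ) (hτ : IsStoppingTime ℱ (fun ω => (τ ω : WithTop ℝ))),
      (∀ ω, τ ω ∈ Ico (0:ℝ) (T - h)) →
      ∀ j ∈ ({-1, 0, 1} : Set ℤ),
      ∀ᵐ ω ∂P, 0 < (P[(FXev X T τ h (Real.log (1+ε₀)) (Real.log (1+ε₀)) j).indicator
          (fun _ => (1:ℝ)) | hτ.measurableSpace]) ω) :
    ∀ n : ℕ, ∀ j ∈ ({-1, 0, 1} : Set ℝ), ∀ A : Set Ω,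
      (∀ t : ℝ, MeasurableSet[ℱ t] (A ∩ {ω | tauSeq X T ε₀ n ω ≤ t})) →
      A ⊆ {ω | tauSeq X T ε₀ n ω < T} → 0 < P A →
      0 < P (A ∩ {ω | Rseq X T ε₀ (n + 1) ω = j}) := by
  intro n j hj A hA hAsub hApos
  have hδ : 0 < Real.log (1 + ε₀) := Real.log_pos (by linarith)
  have hσmem : ∀ ω, tauSeq X T ε₀ n ω ∈ Icc 0 T := tauSeq_mem_Icc hT.le n
  have hσst : IsStoppingTime ℱ (fun ω => (tauSeq X T ε₀ n ω : WithTop ℝ)) := isStoppingTime_tauSeq ℱ hadp hT hδ hcont n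
  have hexk : ∃ k : ℕ,
      0 < P (A ∩ {ω | tauSeq X T ε₀ n ω ≤ T - 2 * (T / (2 * ((k:ℝ) + 2)))}) := by
    by_contra hc
    push_neg at hc
    have hc' : ∀ k : ℕ,
        P (A ∩ {ω | tauSeq X T ε₀ n ω ≤ T - 2 * (T / (2 * ((k:ℝ) + 2)))}) = 0 :=
      fun k => le_antisymm (hc k) (by simp)
    have hAeq : A =
        ⋃ k : ℕ, A ∩ {ω | tauSeq X T ε₀ n ω ≤ T - 2 * (T / (2 * ((k:ℝ) + 2)))} := by
      refine Subset.antisymm (fun ω hω => ?_) (iUnion_subset fun k => inter_subset_left)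
      have hlt : tauSeq X T ε₀ n ω < T := hAsub hω
      obtain ⟨k, hk⟩ := exists_nat_gt (T / (T - tauSeq X T ε₀ n ω))
      have hpos : 0 < T - tauSeq X T ε₀ n ω := sub_pos.mpr hlt
      have hk2 : T / (T - tauSeq X T ε₀ n ω) < (k:ℝ) + 2 := hk.trans (by linarith)
      have hlt2 : T / ((k:ℝ) + 2) < T - tauSeq X T ε₀ n ω := by
        rw [div_lt_iff₀ (by positivity)]
        have h3 := (div_lt_iff₀ hpos).mp hk2
        nlinarith
      refine mem_iUnion.mpr ⟨k, hω, ?_⟩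
      have h2 : 2 * (T / (2 * ((k:ℝ) + 2))) = T / ((k:ℝ) + 2) := by
        field_simp
      rw [mem_setOf_eq, h2]
      linarith
    rw [hAeq, measure_iUnion_null hc'] at hApos
    exact lt_irrefl 0 hApos
  obtain ⟨k, hk⟩ := hexk
  set h : ℝ := T / (2 * ((k:ℝ) + 2)) with hhdef
  have hh0 : 0 < h := by positivity
  have h2h : 2 * h = T / ((k:ℝ) + 2) := by
    rw [hhdef]
    field_simp
  have h2hT : 2 * h < T := by
    rw [h2h]
    refine div_lt_self hT ?_
    have : (0:ℝ) ≤ (k:ℝ) := Nat.cast_nonneg k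
    linarith
  have hhIoo : h ∈ Ioo (0:ℝ) T := ⟨hh0, by linarith⟩
  set τ' : Ω → ℝ := fun ω => min (tauSeq X T ε₀ n ω) (T - 2 * h) with hτ'def
  have hτ' : IsStoppingTime ℱ (fun ω => (τ' ω : WithTop ℝ)) := by
    have := hσst.min_const (T - 2 * h)
    simp only [← WithTop.coe_min] at this
    exact this
  have hτ'mem : ∀ ω, τ' ω ∈ Ico 0 (T - h) := by
    intro ω
    constructor
    · exact le_min (hσmem ω).1 (by linarith)
    · exact (min_le_right _ _).trans_lt (by linarith)
  set B : Set Ω := A ∩ {ω | tauSeq X T ε₀ n ω ≤ T - 2 * h} with hBdef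
  have hPB : 0 < P B := hk
  have hBsubA : B ⊆ A := inter_subset_left
  have hBG : MeasurableSet[hτ'.measurableSpace] B := by
    rw [hτ'.measurableSet]
    refine ⟨(le_iSup (fun i => ℱ i) (T - 2 * h)) _ (hA (T - 2 * h)), ?_⟩
    intro i
    simp only [WithTop.coe_le_coe]
    by_cases hi : T - 2 * h ≤ i
    · have hBi : B ∩ {ω | τ' ω ≤ i} = B := by
        refine inter_eq_left.mpr fun ω hω => ?_
        exact le_trans (min_le_right _ _) hi
      rw [hBi]
      exact ℱ.mono hi _ (hA (T - 2 * h))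
    · push_neg at hi
      have hBi : B ∩ {ω | τ' ω ≤ i} = A ∩ {ω | tauSeq X T ε₀ n ω ≤ i} := by
        ext ω
        simp only [hBdef, hτ'def, mem_inter_iff, mem_setOf_eq]
        constructor
        · rintro ⟨⟨hωA, hω2⟩, hω3⟩
          refine ⟨hωA, ?_⟩
          rcases min_le_iff.mp hω3 with hcase | hcase
          · exact hcase
          · linarith
        · rintro ⟨hωA, hω2⟩
          exact ⟨⟨hωA, by linarith⟩, (min_le_left _ _).trans hω2⟩
      rw [hBi]
      exact hA i
  obtain ⟨j', hj'mem, hsub⟩ : ∃ j' ∈ ({-1, 0, 1} : Set ℤ),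
      B ∩ FXev X T τ' h (Real.log (1+ε₀)) (Real.log (1+ε₀)) j' ⊆
        {ω | Rseq X T ε₀ (n + 1) ω = j} := by
    simp only [mem_insert_iff, mem_singleton_iff] at hj
    rcases hj with rfl | rfl | rfl
    · -- j = -1 : use j' = 1
      refine ⟨1, by simp, ?_⟩
      rintro ω ⟨hωB, hωF⟩
      have hω2 : tauSeq X T ε₀ n ω ≤ T - 2 * h := hωB.2
      have hτω : τ' ω = tauSeq X T ε₀ n ω := min_eq_left hω2
      have hωF' : sSup ((fun t => X (τ' ω + t) ω - X (τ' ω) ω) '' Icc 0 h)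
            < Real.log (1+ε₀) ∧
          sSup ((fun t => X (τ' ω + t) ω - X (τ' ω) ω) '' Ico h (T - τ' ω))
            < -Real.log (1+ε₀) := by
        simpa [FXev] using hωF
      rw [hτω] at hωF'
      exact pathwise_neg hT hδ hcont hh0 hω2 hωF'.1 hωF'.2
    · -- j = 0 : use j' = 0
      refine ⟨0, by simp, ?_⟩
      rintro ω ⟨hωB, hωF⟩
      have hτω : τ' ω = tauSeq X T ε₀ n ω := min_eq_left hωB.2
      have hωF' : sSup ((fun t => |X (τ' ω + t) ω - X (τ' ω) ω|) '' Ico 0 (T - τ' ω))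
          < Real.log (1+ε₀) := by
        simpa [FXev] using hωF
      rw [hτω] at hωF'
      exact pathwise_zero hT hδ hcont hωF'
    · -- j = 1 : use j' = -1
      refine ⟨-1, by simp, ?_⟩
      rintro ω ⟨hωB, hωF⟩
      have hω2 : tauSeq X T ε₀ n ω ≤ T - 2 * h := hωB.2
      have hτω : τ' ω = tauSeq X T ε₀ n ω := min_eq_left hω2
      have hωF' : -Real.log (1+ε₀)
            < sInf ((fun t => X (τ' ω + t) ω - X (τ' ω) ω) '' Icc 0 h) ∧
          Real.log (1+ε₀)
            < sInf ((fun t => X (τ' ω + t) ω - X (τ' ω) ω) '' Ico h (T - τ' ω)) := by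
        simpa [FXev] using hωF
      rw [hτω] at hωF'
      exact pathwise_pos hT hδ hcont hh0 hω2 hωF'.1 hωF'.2
  have hm𝒢 : hτ'.measurableSpace ≤ m := hτ'.measurableSpace_le
  have hposae := hcond h hhIoo τ' hτ' hτ'mem j' hj'mem
  set f : Ω → ℝ := (FXev X T τ' h (Real.log (1+ε₀)) (Real.log (1+ε₀)) j').indicator
    (fun _ => (1:ℝ)) with hfdef
  by_cases hint : Integrable f P
  · haveI : SigmaFinite (P.trim hm𝒢) := by infer_instance
    have heq : ∫ ω in B, (P[f|hτ'.measurableSpace]) ω ∂P = ∫ ω in B, f ω ∂P :=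
      setIntegral_condExp hm𝒢 hint hBG
    have hgpos : 0 < ∫ ω in B, (P[f|hτ'.measurableSpace]) ω ∂P := by
      rw [setIntegral_pos_iff_support_of_nonneg_ae
        (ae_restrict_of_ae (hposae.mono fun ω hω => hω.le)) integrable_condExp.integrableOn]
      have hnull : P (B \ Function.support (P[f|hτ'.measurableSpace])) = 0 := by
        refine measure_mono_null (fun ω hω => ?_) (ae_iff.mp hposae)
        simp only [mem_setOf_eq, not_lt]
        have := hω.2
        rw [Function.notMem_support] at this
        rw [this]
      calc (0:ENNReal) < P B := hPB
        _ ≤ P (Function.support (P[f|hτ'.measurableSpace]) ∩ B)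
            + P (B \ Function.support (P[f|hτ'.measurableSpace])) := by
          refine (measure_mono ?_).trans (measure_union_le _ _)
          intro ω hω
          by_cases hω2 : ω ∈ Function.support (P[f|hτ'.measurableSpace])
          · exact Or.inl ⟨hω2, hω⟩
          · exact Or.inr ⟨hω, hω2⟩
        _ = P (Function.support (P[f|hτ'.measurableSpace]) ∩ B) := by rw [hnull, add_zero]
    refine lt_of_lt_of_le ?_ (measure_mono
      (fun ω hω => (⟨hBsubA hω.1, hsub hω⟩ :
        ω ∈ A ∩ {ω | Rseq X T ε₀ (n + 1) ω = j})))
    by_contra h0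
    push_neg at h0
    have hnull2 : P (B ∩ FXev X T τ' h (Real.log (1+ε₀)) (Real.log (1+ε₀)) j') = 0 :=
      le_antisymm h0 (by simp)
    have hf0 : ∫ ω in B, f ω ∂P = 0 := by
      refine integral_eq_zero_of_ae ?_
      rw [EventuallyEq, ae_restrict_iff' (hm𝒢 _ hBG)]
      refine (measure_eq_zero_iff_ae_notMem.mp hnull2).mono fun ω hω hωB => ?_
      exact indicator_of_notMem (fun hωF => hω ⟨hωB, hωF⟩) _
    rw [heq, hf0] at hgpos
    exact lt_irrefl 0 hgpos
  · exfalso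
    haveI : (ae P).NeBot := ae_neBot.mpr (IsProbabilityMeasure.ne_zero P)
    rw [condExp_of_not_integrable hint] at hposae
    obtain ⟨ω, hω⟩ := hposae.exists
    simp only [Pi.zero_apply] at hω
    exact lt_irrefl 0 hω

end
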